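/- Let f = f(t₁, x₁, t₂, x₂) be a smooth function on (ℝ × ℝ³)² of the translation-invariant form f = F(t₁−t₂, x₁−x₂), and suppose the Galilean boost Ward identities hold for scalar singlets: (−t₁ ∂_{x₁^i} − t₂ ∂_{x₂^i}) f = 0 for i = 1,2,3 and all points. Then F(t, x) is independent of x on the region t ≠ 0. If moreover the dilatation Ward identity (t ∂_t + x·∂_x + Δ₁ + Δ₂) F = 0 holds and F is even in t, then F(t,x) = c |t|^{−(Δ₁+Δ₂)} for t ≠ 0 for some constant c. -/

import Mathlib

/-- In Galilean CFT, the boost Ward identities force the singlet two-point function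
    F(t₁₂, x₁₂) to be independent of the spatial separation for t ≠ 0; together with
    the dilatation Ward identity and evenness in t it is a pure power law c|t|^{−(Δ₁+Δ₂)}. -/
theorem gcft_singlet_two_point (Δ₁ Δ₂ : ℝ) (F : ℝ → (Fin 3 → ℝ) → ℝ)
    (hsm : ContDiff ℝ (⊤ : ℕ∞) (fun p : ℝ × (Fin 3 → ℝ) => F p.1 p.2))
    (hB : ∀ (i : Fin 3) (t₁ t₂ : ℝ) (x₁ x₂ : Fin 3 → ℝ),
      -t₁ * deriv (fun s => F (t₁ - t₂) (Function.update x₁ i s - x₂)) (x₁ i)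
        - t₂ * deriv (fun s => F (t₁ - t₂) (x₁ - Function.update x₂ i s)) (x₂ i) = 0) :
    (∀ (t : ℝ) (x y : Fin 3 → ℝ), t ≠ 0 → F t x = F t y) ∧
    ((∀ (t : ℝ) (x : Fin 3 → ℝ), t ≠ 0 →
        t * deriv (fun s => F s x) t
          + (∑ i, x i * deriv (fun s => F t (Function.update x i s)) (x i))
          + (Δ₁ + Δ₂) * F t x = 0) →
      (∀ (t : ℝ) (x : Fin 3 → ℝ), F (-t) x = F t x) →
      ∃ c : ℝ, ∀ (t : ℝ) (x : Fin 3 → ℝ), t ≠ 0 →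
        F t x = c * |t| ^ (-(Δ₁ + Δ₂))) := by
  have hFdiff : Differentiable ℝ (fun p : ℝ × (Fin 3 → ℝ) => F p.1 p.2) :=
    hsm.differentiable (by simp)
  have hupd : ∀ (i : Fin 3) (z : Fin 3 → ℝ),
      Differentiable ℝ (fun s : ℝ => Function.update z i s) := by
    intro i z
    rw [differentiable_pi]
    intro j
    simp only [Function.update_apply]
    by_cases h : j = i <;> simp [h]
  have hdiff : ∀ (t : ℝ) (i : Fin 3) (z : Fin 3 → ℝ),
      Differentiable ℝ (fun s : ℝ => F t (Function.update z i s)) := by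
    intro t i z
    exact hFdiff.comp ((differentiable_const t).prodMk (hupd i z))
  have key : ∀ (t : ℝ), t ≠ 0 → ∀ (i : Fin 3) (z : Fin 3 → ℝ) (s₀ : ℝ),
      deriv (fun s => F t (Function.update z i s)) s₀ = 0 := by
    intro t ht i z s₀
    have h := hB i t 0 (Function.update z i s₀) 0
    simp only [sub_zero, Function.update_idem, Function.update_self, zero_mul, mul_zero,
      neg_mul, neg_zero] at h
    have h2 : t * deriv (fun s => F t (Function.update z i s)) s₀ = 0 := by linarith
    rcases mul_eq_zero.mp h2 with h3 | h3
    · exact absurd h3 ht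
    · exact h3
  have part1 : ∀ (t : ℝ) (x y : Fin 3 → ℝ), t ≠ 0 → F t x = F t y := by
    intro t x y ht
    have step : ∀ (i : Fin 3) (z : Fin 3 → ℝ) (a b : ℝ),
        F t (Function.update z i a) = F t (Function.update z i b) := by
      intro i z a b
      exact is_const_of_deriv_eq_zero (hdiff t i z) (key t ht i z) a b
    have h0 : F t x = F t (Function.update x 0 (y 0)) := by
      conv_lhs => rw [← Function.update_eq_self 0 x]
      exact step 0 x (x 0) (y 0)
    have h1 : F t (Function.update x 0 (y 0))
        = F t (Function.update (Function.update x 0 (y 0)) 1 (y 1)) := by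
      conv_lhs => rw [← Function.update_eq_self 1 (Function.update x 0 (y 0))]
      simp only [Function.update_self, Function.update_apply]
      exact step 1 _ _ (y 1)
    have h2 : F t (Function.update (Function.update x 0 (y 0)) 1 (y 1))
        = F t (Function.update (Function.update (Function.update x 0 (y 0)) 1 (y 1)) 2 (y 2)) := by
      conv_lhs => rw [← Function.update_eq_self 2
        (Function.update (Function.update x 0 (y 0)) 1 (y 1))]
      simp only [Function.update_apply]
      exact step 2 _ _ (y 2)
    have hy : Function.update (Function.update (Function.update x 0 (y 0)) 1 (y 1)) 2 (y 2) = y := by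
      funext j
      fin_cases j <;> simp [Function.update_apply]
    rw [h0, h1, h2, hy]
  refine ⟨part1, ?_⟩
  intro hD heven
  set Δ : ℝ := Δ₁ + Δ₂ with hΔ
  set g : ℝ → ℝ := fun t => F t 0 with hg
  have hg_diff : Differentiable ℝ g := by
    exact hFdiff.comp (differentiable_id.prodMk (differentiable_const (0 : Fin 3 → ℝ)))
  have hode : ∀ t : ℝ, t ≠ 0 → t * deriv g t + Δ * g t = 0 := by
    intro t ht
    have h := hD t 0 ht
    simpa using h
  -- constancy of φ := g t * t^Δ on Ioi 0
  have hphi : ∀ t : ℝ, 0 < t → HasDerivAt (fun s => g s * s ^ Δ) 0 t := by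
    intro t ht
    have hgt : HasDerivAt g (deriv g t) t := (hg_diff t).hasDerivAt
    have hpow : HasDerivAt (fun s : ℝ => s ^ Δ) (Δ * t ^ (Δ - 1)) t :=
      Real.hasDerivAt_rpow_const (Or.inl ht.ne')
    have hmul := hgt.mul hpow
    have hd : deriv g t = -(Δ * g t) / t := by
      have := hode t ht.ne'
      field_simp
      linarith
    have h1 : t ^ (Δ - 1) = t ^ Δ / t := Real.rpow_sub_one ht.ne' Δ
    have : deriv g t * t ^ Δ + g t * (Δ * t ^ (Δ - 1)) = 0 := by
      rw [hd, h1]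
      field_simp
      ring
    rwa [this] at hmul
  have hconst : ∀ t : ℝ, 0 < t → g t * t ^ Δ = g 1 := by
    intro t ht
    have := (convex_Ioi (0:ℝ)).is_const_of_fderivWithin_eq_zero
      (f := fun s => g s * s ^ Δ) (s := Set.Ioi 0)
      (fun s hs => ((hphi s hs).differentiableAt).differentiableWithinAt)
      (fun s hs => by
        rw [fderivWithin_of_isOpen isOpen_Ioi hs, (hphi s hs).hasFDerivAt.fderiv]
        ext
        simp)
      ht (Set.mem_Ioi.mpr one_pos)
    simpa using this
  refine ⟨g 1, ?_⟩
  intro t x ht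
  have habs : ∀ s : ℝ, 0 < s → g s = g 1 * s ^ (-Δ) := by
    intro s hs
    have hpos : (0:ℝ) < s ^ Δ := Real.rpow_pos_of_pos hs Δ
    have := hconst s hs
    rw [Real.rpow_neg hs.le]
    field_simp
    linarith [this]
  rcases lt_or_gt_of_ne ht with htneg | htpos
  · have h1 : F t x = F t 0 := part1 t x 0 ht
    have h2 : F t 0 = F (-t) 0 := by
      have := heven (-t) 0
      rw [neg_neg] at this
      exact this
    have h3 : g (-t) = g 1 * (-t) ^ (-Δ) := habs (-t) (by linarith)
    rw [h1, h2]
    have : |t| = -t := abs_of_neg htneg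
    rw [this]
    exact h3
  · have h1 : F t x = F t 0 := part1 t x 0 ht
    rw [h1, abs_of_pos htpos]
    exact habs t htpos
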